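/- For the wire-tap secrecy scheme using cosets of C^⊥ over BSC(p), the posterior distribution of the secret message given received vector x̂ is a permutation (by the coset of x̂) of the posterior given any received vector in C^⊥: P(ĥ | x̂) = P(ĥ ⊕ ĥ' | x̂₀) where x̂ = ĥ' G_{C^⫫} ⊕ c' with c' ∈ C^⊥ and x̂₀ ∈ C^⊥. Consequently the Bhattacharyya coefficient between the posterior and the uniform distribution on F_2^k does not depend on the received vector. -/
import Mathlib


open scoped Classical

/-- Hamming weight of a binary vector. -/
def hammingWt {ι : Type*} [Fintype ι] (v : ι → ZMod 2) : ℕ :=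
  (Finset.univ.filter fun i => v i ≠ 0).card

/-- i.i.d. Bernoulli(p) probability of an error vector. -/
noncomputable def bernP (p : ℝ) (n : ℕ) {ι : Type*} [Fintype ι] (v : ι → ZMod 2) : ℝ :=
  p ^ hammingWt v * (1 - p) ^ (n - hammingWt v)

/-- Bayes posterior of the secret message ĥ given received vector x̂ in the
wire-tap coset coding scheme using cosets of D = C^⊥ (uniform priors). -/
noncomputable def wiretapPost (n k : ℕ) (p : ℝ)
    (D : Submodule (ZMod 2) (Fin n → ZMod 2))
    (Gdd : Matrix (Fin k) (Fin n) (ZMod 2))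
    (xh : Fin n → ZMod 2) (hh : Fin k → ZMod 2) : ℝ :=
  (∑ z : Fin n → ZMod 2,
      (if z + (Matrix.vecMul hh Gdd + xh) ∈ D then bernP p n z else 0)) /
    (∑ h' : Fin k → ZMod 2, ∑ z : Fin n → ZMod 2,
      (if z + (Matrix.vecMul h' Gdd + xh) ∈ D then bernP p n z else 0))

-- aux lemmas to insert above theorem
private lemma sumInner_shift (p : ℝ) (n : ℕ) (D : Submodule (ZMod 2) (Fin n → ZMod 2))
    {c' : Fin n → ZMod 2} (hc' : c' ∈ D) (v : Fin n → ZMod 2) :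
    (∑ z : Fin n → ZMod 2, (if z + (v + c') ∈ D then bernP p n z else 0))
      = ∑ z : Fin n → ZMod 2, (if z + v ∈ D then bernP p n z else 0) := by
  refine Finset.sum_congr rfl fun z _ => ?_
  have hiff : (z + (v + c') ∈ D) ↔ (z + v ∈ D) := by
    rw [show z + (v + c') = (z + v) + c' by abel]
    constructor
    · intro h; simpa using D.sub_mem h hc'
    · intro h; exact D.add_mem h hc'
  exact if_congr hiff rfl rfl

private lemma post_eq (n k : ℕ) (p : ℝ) (D : Submodule (ZMod 2) (Fin n → ZMod 2))
    (Gdd : Matrix (Fin k) (Fin n) (ZMod 2))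
    (xh x0 : Fin n → ZMod 2) (hh hh' : Fin k → ZMod 2) (c' : Fin n → ZMod 2)
    (hc' : c' ∈ D) (hx : xh = Matrix.vecMul hh' Gdd + c') (hx0 : x0 ∈ D) :
    wiretapPost n k p D Gdd xh hh = wiretapPost n k p D Gdd x0 (hh + hh') := by
  have key : ∀ g : Fin k → ZMod 2,
      (∑ z : Fin n → ZMod 2, (if z + (Matrix.vecMul g Gdd + xh) ∈ D then bernP p n z else 0))
        = ∑ z : Fin n → ZMod 2,
            (if z + Matrix.vecMul (g + hh') Gdd ∈ D then bernP p n z else 0) := by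
    intro g
    have h1 : Matrix.vecMul g Gdd + xh = Matrix.vecMul (g + hh') Gdd + c' := by
      rw [hx, Matrix.add_vecMul]; abel
    rw [h1, sumInner_shift p n D hc']
  have key0 : ∀ g : Fin k → ZMod 2,
      (∑ z : Fin n → ZMod 2, (if z + (Matrix.vecMul g Gdd + x0) ∈ D then bernP p n z else 0))
        = ∑ z : Fin n → ZMod 2,
            (if z + Matrix.vecMul g Gdd ∈ D then bernP p n z else 0) :=
    fun g => sumInner_shift p n D hx0 (Matrix.vecMul g Gdd)
  unfold wiretapPost
  rw [key hh, key0 (hh + hh')]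
  congr 1
  rw [Finset.sum_congr rfl fun h' _ => key h',
      Finset.sum_congr rfl fun h' _ => key0 h']
  exact Fintype.sum_equiv (Equiv.addRight hh') _ _ (fun h => rfl)

/-- The wire-tap posterior given x̂ is a coset-permutation of the
posterior given any vector in C^⊥: P(ĥ|x̂) = P(ĥ ⊕ ĥ'|x̂₀) when
x̂ = ĥ' G_{C^⫫} ⊕ c' with c' ∈ C^⊥ and x̂₀ ∈ C^⊥.  Consequently the
Bhattacharyya coefficient between the posterior and the uniform distribution
on F_2^k does not depend on the received vector. -/
theorem wiretap_posterior_permutation_invariance (n k : ℕ) (p : ℝ)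
    (hp0 : 0 ≤ p) (hp1 : p ≤ 1)
    (D : Submodule (ZMod 2) (Fin n → ZMod 2))
    (Gdd : Matrix (Fin k) (Fin n) (ZMod 2))
    (hpart : ∀ x : Fin n → ZMod 2,
      ∃! hc : (Fin k → ZMod 2) × {c // c ∈ D},
        x = Matrix.vecMul hc.1 Gdd + (hc.2 : Fin n → ZMod 2)) :
    (∀ (xh x0 : Fin n → ZMod 2) (hh hh' : Fin k → ZMod 2) (c' : Fin n → ZMod 2),
      c' ∈ D → xh = Matrix.vecMul hh' Gdd + c' → x0 ∈ D →
        wiretapPost n k p D Gdd xh hh = wiretapPost n k p D Gdd x0 (hh + hh')) ∧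
    (∀ xh xh' : Fin n → ZMod 2,
      ∑ hh : Fin k → ZMod 2,
          Real.sqrt (wiretapPost n k p D Gdd xh hh * ((2 : ℝ) ^ k)⁻¹)
        = ∑ hh : Fin k → ZMod 2,
          Real.sqrt (wiretapPost n k p D Gdd xh' hh * ((2 : ℝ) ^ k)⁻¹)) := by
  constructor
  · exact fun xh x0 hh hh' c' hc' hx hx0 => post_eq n k p D Gdd xh x0 hh hh' c' hc' hx hx0
  · intro xh xh'
    have main : ∀ x : Fin n → ZMod 2,
        (∑ hh : Fin k → ZMod 2,
            Real.sqrt (wiretapPost n k p D Gdd x hh * ((2 : ℝ) ^ k)⁻¹))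
          = ∑ hh : Fin k → ZMod 2,
            Real.sqrt (wiretapPost n k p D Gdd 0 hh * ((2 : ℝ) ^ k)⁻¹) := by
      intro x
      obtain ⟨⟨hh', c'⟩, hx, -⟩ := hpart x
      have h1 : ∀ hh : Fin k → ZMod 2,
          wiretapPost n k p D Gdd x hh = wiretapPost n k p D Gdd 0 (hh + hh') :=
        fun hh => post_eq n k p D Gdd x 0 hh hh' c' c'.2 hx D.zero_mem
      calc (∑ hh : Fin k → ZMod 2,
              Real.sqrt (wiretapPost n k p D Gdd x hh * ((2 : ℝ) ^ k)⁻¹))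
          = ∑ hh : Fin k → ZMod 2,
              Real.sqrt (wiretapPost n k p D Gdd 0 (hh + hh') * ((2 : ℝ) ^ k)⁻¹) := by
            exact Finset.sum_congr rfl fun hh _ => by rw [h1 hh]
        _ = ∑ hh : Fin k → ZMod 2,
              Real.sqrt (wiretapPost n k p D Gdd 0 hh * ((2 : ℝ) ^ k)⁻¹) :=
            Fintype.sum_equiv (Equiv.addRight hh') _ _ (fun hh => rfl)
    rw [main xh, main xh']
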